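/- Let R be a commutative Noetherian ring of prime characteristic p > 0, let I be an ideal of R of positive height, and let s ≥ 1 be a rational number. Then I* + I_s is contained in the weak s-closure of I. -/

import Mathlib

open Pointwise

/-- `R°`: the set of elements of `R` not contained in any minimal prime of `R`. -/
def RCirc (R : Type*) [CommRing R] : Set R :=
  {c | ∀ P ∈ minimalPrimes R, c ∉ P}

/-- The `q`-th Frobenius power `I^[q]` of an ideal `I`, generated by `q`-th powers
of elements of `I`. -/
def frobPow {R : Type*} [CommRing R] (I : Ideal R) (q : ℕ) : Ideal R :=
  Ideal.span ((fun f => f ^ q) '' (I : Set R))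

/-- The `(s,q)` mixed power `I^(s,q) = I^⌈sq⌉ + I^[q]`. -/
noncomputable def mixedPow {R : Type*} [CommRing R] (I : Ideal R) (s : ℝ) (q : ℕ) : Ideal R :=
  I ^ ⌈s * (q : ℝ)⌉₊ + frobPow I q

/-- The weak `s`-closure of `I`: elements `x` such that there is `c ∈ R°` with
`c·x^q ∈ I^(s,q)` for all sufficiently large powers `q = p^e` of `p`. -/
def weakCl {R : Type*} [CommRing R] (p : ℕ) (I : Ideal R) (s : ℝ) : Set R :=
  {x | ∃ c ∈ RCirc R, ∃ N : ℕ, ∀ e : ℕ, N ≤ e → c * x ^ p ^ e ∈ mixedPow I s (p ^ e)}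

/-- The tight closure `I*` of `I`. -/
def tightCl {R : Type*} [CommRing R] (p : ℕ) (I : Ideal R) : Set R :=
  {x | ∃ c ∈ RCirc R, ∃ N : ℕ, ∀ e : ℕ, N ≤ e → c * x ^ p ^ e ∈ frobPow I (p ^ e)}

/-- The integral closure of `I`: elements `x` such that there is `c ∈ R°` with
`c·x^n ∈ I^n` for all sufficiently large `n`. -/
def intCl {R : Type*} [CommRing R] (I : Ideal R) : Set R :=
  {x | ∃ c ∈ RCirc R, ∃ N : ℕ, ∀ n : ℕ, N ≤ n → c * x ^ n ∈ I ^ n}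

/-- The `α`-th rational power `I_α` of `I`, for rational `α = a/b ≥ 0`:
elements `x` with `x^b` in the integral closure of `I^a`. -/
noncomputable def ratPow {R : Type*} [CommRing R] (I : Ideal R) (α : ℚ) : Set R :=
  {x | x ^ α.den ∈ intCl (I ^ α.num.toNat)}

/-- `μ(I)`: the minimal number of generators of `I`. -/
noncomputable def mu {R : Type*} [CommRing R] (I : Ideal R) : ℕ :=
  sInf {m : ℕ | ∃ s : Finset R, s.card = m ∧ Ideal.span (s : Set R) = I}

/-- An ideal has positive height if it is not contained in any minimal prime. -/
def PosHeight {R : Type*} [CommRing R] (I : Ideal R) : Prop :=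
  ∀ P ∈ minimalPrimes R, ¬ I ≤ P

/-- `I* + I_s` is contained in the weak `s`-closure of `I`, for `I` of
positive height and rational `s ≥ 1`. -/
theorem stmt6 {R : Type*} [CommRing R] [IsNoetherianRing R]
    (p : ℕ) (hp : p.Prime) (hcp : CharP R p)
    (I : Ideal R) (hI : PosHeight I) (s : ℚ) (hs : 1 ≤ s) :
    tightCl p I + ratPow I s ⊆ weakCl p I (s : ℝ) := by
  haveI := Fact.mk hp
  -- find d ∈ I with d ∈ R°, by prime avoidance
  obtain ⟨d, hdI, hd⟩ : ∃ d ∈ I, d ∈ RCirc R := by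
    by_contra h
    push_neg at h
    have hfin := minimalPrimes.finite_of_isNoetherianRing R
    set t : Finset (Ideal R) := hfin.toFinset with ht
    have hsub : (I : Set R) ⊆ ⋃ P ∈ (↑t : Set (Ideal R)), ((id P : Ideal R) : Set R) := by
      intro x hx
      have hx' := h x hx
      simp only [RCirc, Set.mem_setOf_eq] at hx'
      push_neg at hx'
      obtain ⟨P, hP, hxP⟩ := hx'
      exact Set.mem_biUnion (by simpa [ht] using hP) hxP
    rw [Ideal.subset_union_prime (f := id) (⊥ : Ideal R) ⊥
      (fun P hP _ _ => ((hfin.mem_toFinset.mp hP).1.1 : (id P).IsPrime))] at hsub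
    obtain ⟨P, hP, hle⟩ := hsub
    exact hI P (hfin.mem_toFinset.mp hP) hle
  rintro x hx
  rw [Set.mem_add] at hx
  obtain ⟨u, hu, v, hv, rfl⟩ := hx
  obtain ⟨c₁, hc₁, N₁, hN₁⟩ := hu
  obtain ⟨c₂, hc₂, N₂, hN₂⟩ := hv
  set a := s.num.toNat with haa
  set b := s.den with hbb
  have hb : 0 < b := s.pos
  have hnum : (0 : ℤ) ≤ s.num := Rat.num_nonneg.mpr (le_trans zero_le_one hs)
  have hcast : (s : ℝ) = (a : ℝ) / (b : ℝ) := by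
    rw [Rat.cast_def]
    congr 1
    rw [haa]
    exact_mod_cast (Int.toNat_of_nonneg hnum).symm
  refine ⟨c₁ * (c₂ * d ^ a), ?_, max N₁ (b * N₂), fun e he => ?_⟩
  · intro P hP hmem
    have hPr : P.IsPrime := hP.1.1
    rcases hPr.mem_or_mem hmem with h1 | h1
    · exact hc₁ P hP h1
    rcases hPr.mem_or_mem h1 with h2 | h2
    · exact hc₂ P hP h2
    · exact hd P hP (hPr.mem_of_pow_mem _ h2)
  · set q := p ^ e with hq
    have hqe : b * N₂ ≤ q := by
      calc b * N₂ ≤ e := le_of_max_le_right he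
        _ ≤ 2 ^ e := (Nat.lt_two_pow_self (n := e)).le
        _ ≤ q := Nat.pow_le_pow_left hp.two_le e
    set n := q / b with hn
    have hnN : N₂ ≤ n := Nat.le_div_iff_mul_le hb |>.mpr (by rwa [mul_comm] at hqe)
    have H1 : c₁ * u ^ q ∈ frobPow I q := hN₁ e (le_of_max_le_left he)
    -- the rational-power part
    have H2 : (c₂ * d ^ a) * v ^ q ∈ I ^ (a * n + a) := by
      have hqsplit : v ^ q = v ^ (b * n) * v ^ (q % b) := by
        rw [← pow_add, hn, Nat.div_add_mod]
      have hv1 : c₂ * (v ^ b) ^ n ∈ (I ^ a) ^ n := hN₂ n hnN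
      have hv2 : c₂ * v ^ (b * n) ∈ I ^ (a * n) := by
        rw [← pow_mul, ← pow_mul] at hv1
        exact hv1
      have hd' : d ^ a ∈ I ^ a := Ideal.pow_mem_pow hdI a
      have : (c₂ * v ^ (b * n)) * d ^ a ∈ I ^ (a * n) * I ^ a := Ideal.mul_mem_mul hv2 hd'
      rw [← pow_add] at this
      have hfinal : ((c₂ * v ^ (b * n)) * d ^ a) * v ^ (q % b) ∈ I ^ (a * n + a) :=
        Ideal.mul_mem_right _ _ this
      have heq : (c₂ * d ^ a) * v ^ q = ((c₂ * v ^ (b * n)) * d ^ a) * v ^ (q % b) := by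
        rw [hqsplit]; ring
      rwa [heq]
    have hceil : ⌈(s : ℝ) * (q : ℝ)⌉₊ ≤ a * n + a := by
      rw [Nat.ceil_le, hcast, div_mul_eq_mul_div, div_le_iff₀ (by positivity)]
      have hqlt : q ≤ b * n + b := by
        calc q = b * n + q % b := by rw [hn, Nat.div_add_mod]
          _ ≤ b * n + b := Nat.add_le_add_left (Nat.mod_lt q hb).le _
      calc (a : ℝ) * q ≤ (a : ℝ) * (b * n + b) := by
            apply mul_le_mul_of_nonneg_left _ (by positivity)
            exact_mod_cast hqlt
        _ = ((a * n + a : ℕ) : ℝ) * b := by push_cast; ring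
    have H2' : (c₂ * d ^ a) * v ^ q ∈ I ^ ⌈(s : ℝ) * (q : ℝ)⌉₊ :=
      Ideal.pow_le_pow_right hceil H2
    -- combine using Frobenius
    have hfrob : (u + v) ^ q = u ^ q + v ^ q := add_pow_char_pow u v (p := p) (n := e)
    have heq : (c₁ * (c₂ * d ^ a)) * (u + v) ^ q
        = (c₂ * d ^ a) * (c₁ * u ^ q) + c₁ * ((c₂ * d ^ a) * v ^ q) := by
      rw [hfrob]; ring
    rw [heq, mixedPow, Submodule.add_eq_sup]
    exact Submodule.add_mem _
      (Submodule.mem_sup_right (Ideal.mul_mem_left _ _ H1))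
      (Submodule.mem_sup_left (Ideal.mul_mem_left _ _ H2'))
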